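/- Let c : (ℕ → Bool) → [0,1] be the map c(x) = Σ_{n∈ℕ} x(n)/2^{n+1} (reading true as 1 and false as 0). A subset X of the unit interval [0,1] has sharp measure zero if, and only if, c⁻¹(X) has sharp measure zero as a subset of the Cantor space. -/

import Mathlib

-- The Cantor space `ℕ → Bool` carries the metric `dist x y = (1/2)^n`, where `n` is the
-- least index at which `x` and `y` differ; the unit interval carries the metric from `ℝ`.
attribute [local instance] PiNat.metricSpace

/-- A subset `X` of a metric space `Y` has sharp measure zero if for every sequence
`(ε n)` of positive reals there are a sequence `(U n)` of subsets of `Y` with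
`diam (U n) ≤ ε n` for every `n` whose union covers `X`, together with a map
`π : ℕ → ℕ` with finite fibers such that every `x ∈ X` belongs to
`⋃ {U k : π k = m}` for all but finitely many `m`. -/
def HasSharpMeasureZero {Y : Type*} [MetricSpace Y] (X : Set Y) : Prop :=
  ∀ ε : ℕ → ℝ, (∀ n, 0 < ε n) →
    ∃ (U : ℕ → Set Y) (π : ℕ → ℕ),
      (∀ n, EMetric.diam (U n) ≤ ENNReal.ofReal (ε n)) ∧ X ⊆ ⋃ n, U n ∧
      (∀ m, (π ⁻¹' {m}).Finite) ∧
      ∀ x ∈ X, ∀ᶠ m in Filter.atTop, x ∈ ⋃ k ∈ π ⁻¹' {m}, U k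

lemma cantorSum_mem_Icc (x : ℕ → Bool) :
    (∑' n : ℕ, (if x n then (1 : ℝ) else 0) / 2 ^ (n + 1)) ∈ Set.Icc (0 : ℝ) 1 := by
  have key : ∀ n : ℕ, (1 : ℝ) / 2 / 2 ^ n = 1 / 2 ^ (n + 1) := by
    intro n; rw [pow_succ]; ring
  have hle : ∀ n : ℕ, (if x n then (1 : ℝ) else 0) / 2 ^ (n + 1) ≤ 1 / 2 / 2 ^ n := by
    intro n
    rw [key n]
    by_cases h : x n <;> simp [h]
  have hnn : ∀ n : ℕ, 0 ≤ (if x n then (1 : ℝ) else 0) / 2 ^ (n + 1) := by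
    intro n
    by_cases h : x n <;> simp [h]
  constructor
  · exact tsum_nonneg hnn
  · calc (∑' n : ℕ, (if x n then (1 : ℝ) else 0) / 2 ^ (n + 1))
        ≤ ∑' n : ℕ, (1 : ℝ) / 2 / 2 ^ n := by
          refine Summable.tsum_le_tsum hle ?_ ?_
          · exact Summable.of_nonneg_of_le hnn hle (summable_geometric_two' 1)
          · exact summable_geometric_two' 1
      _ = 1 := tsum_geometric_two' 1

/-- The canonical map `c : (ℕ → Bool) → [0,1]`, `c x = ∑ x n / 2 ^ (n + 1)`. -/
noncomputable def cantorMap (x : ℕ → Bool) : Set.Icc (0 : ℝ) 1 :=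
  ⟨∑' n : ℕ, (if x n then (1 : ℝ) else 0) / 2 ^ (n + 1), cantorSum_mem_Icc x⟩

namespace CantorAux
open Finset Filter

noncomputable def bitS (x : ℕ → Bool) (n : ℕ) : ℝ := (if x n then (1 : ℝ) else 0) / 2 ^ (n + 1)

lemma bitS_nonneg (x : ℕ → Bool) (n : ℕ) : 0 ≤ bitS x n := by
  unfold bitS; by_cases h : x n <;> simp [h]

lemma bitS_le (x : ℕ → Bool) (n : ℕ) : bitS x n ≤ (1 : ℝ) / 2 / 2 ^ n := by
  unfold bitS
  have key : (1 : ℝ) / 2 / 2 ^ n = 1 / 2 ^ (n + 1) := by rw [pow_succ]; ring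
  rw [key]; by_cases h : x n <;> simp [h]

lemma summable_bitS (x : ℕ → Bool) : Summable (bitS x) :=
  Summable.of_nonneg_of_le (bitS_nonneg x) (bitS_le x) (summable_geometric_two' 1)

lemma cantorMap_coe (x : ℕ → Bool) : (cantorMap x : ℝ) = ∑' n, bitS x n := rfl

lemma tail_nonneg (x : ℕ → Bool) (k : ℕ) : 0 ≤ ∑' n, bitS x (n + k) :=
  tsum_nonneg fun n => bitS_nonneg x _

lemma tail_le (x : ℕ → Bool) (k : ℕ) : ∑' n, bitS x (n + k) ≤ (1 / 2 : ℝ) ^ k := by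
  have h1 : ∀ n : ℕ, bitS x (n + k) ≤ (1 / 2 : ℝ) ^ k * (1 / 2 / 2 ^ n) := by
    intro n
    calc bitS x (n + k) ≤ (1 : ℝ) / 2 / 2 ^ (n + k) := bitS_le x _
      _ = (1 / 2 : ℝ) ^ k * (1 / 2 / 2 ^ n) := by
          rw [pow_add, one_div, inv_pow]; ring
  calc ∑' n, bitS x (n + k) ≤ ∑' n : ℕ, (1 / 2 : ℝ) ^ k * (1 / 2 / 2 ^ n) := by
        refine Summable.tsum_le_tsum h1 ((summable_bitS x).comp_injective (add_left_injective k)) ?_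
        exact (summable_geometric_two' 1).mul_left _
    _ = (1 / 2 : ℝ) ^ k * 1 := by rw [tsum_mul_left, tsum_geometric_two' 1]
    _ = (1 / 2 : ℝ) ^ k := mul_one _

lemma partial_bounds (x : ℕ → Bool) (k : ℕ) :
    ∑ j ∈ range k, bitS x j ≤ (cantorMap x : ℝ) ∧
      (cantorMap x : ℝ) ≤ ∑ j ∈ range k, bitS x j + (1 / 2) ^ k := by
  have hd := Summable.sum_add_tsum_nat_add k (summable_bitS x)
  rw [cantorMap_coe, ← hd]
  constructor
  · linarith [tail_nonneg x k]
  · linarith [tail_le x k]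

def tval (k : ℕ) (x : ℕ → Bool) : ℕ := ∑ j ∈ range k, (if x j then 1 else 0) * 2 ^ (k - 1 - j)

lemma tval_succ (k : ℕ) (x : ℕ → Bool) :
    tval (k + 1) x = tval k (fun j => x (j + 1)) + (if x 0 then 1 else 0) * 2 ^ k := by
  unfold tval
  rw [Finset.sum_range_succ']
  congr 1
  refine Finset.sum_congr rfl fun j hj => ?_
  congr 2
  omega

lemma tval_lt (k : ℕ) (x : ℕ → Bool) : tval k x < 2 ^ k := by
  induction k generalizing x with
  | zero => simp [tval]
  | succ k ih =>
    rw [tval_succ]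
    have := ih (fun j => x (j + 1))
    have h2 : (2:ℕ) ^ (k+1) = 2 ^ k + 2 ^ k := by rw [pow_succ]; omega
    by_cases h : x 0 <;> simp [h] <;> omega

lemma tval_inj (k : ℕ) (x y : ℕ → Bool) (h : tval k x = tval k y) :
    ∀ j < k, x j = y j := by
  induction k generalizing x y with
  | zero => omega
  | succ k ih =>
    rw [tval_succ, tval_succ] at h
    have hx := tval_lt k (fun j => x (j + 1))
    have hy := tval_lt k (fun j => y (j + 1))
    have h0 : x 0 = y 0 := by
      by_cases h1 : x 0 <;> by_cases h2 : y 0 <;> simp [h1, h2] at h ⊢ <;> omega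
    have ht : tval k (fun j => x (j + 1)) = tval k (fun j => y (j + 1)) := by
      rw [h0] at h; omega
    intro j hj
    match j with
    | 0 => exact h0
    | Nat.succ i => exact ih _ _ ht i (by omega)

lemma partial_eq_tval (k : ℕ) (x : ℕ → Bool) :
    ∑ j ∈ range k, bitS x j = (tval k x : ℝ) / 2 ^ k := by
  unfold tval bitS
  push_cast
  rw [Finset.sum_div]
  refine Finset.sum_congr rfl fun j hj => ?_
  rw [Finset.mem_range] at hj
  have hpow : (2 : ℝ) ^ (k - 1 - j) * 2 ^ (j + 1) = 2 ^ k := by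
    rw [← pow_add]; congr 1; omega
  have h1 : (0:ℝ) < 2 ^ (j+1) := by positivity
  have h2 : (0:ℝ) < 2 ^ k := by positivity
  by_cases h : x j <;> simp [h] <;> field_simp <;> linarith

lemma dist_cantorMap_le (x y : ℕ → Bool) : dist (cantorMap x) (cantorMap y) ≤ dist x y := by
  by_cases hxy : x = y
  · simp [hxy]
  · set d := PiNat.firstDiff x y with hd
    rw [PiNat.dist_eq_of_ne hxy]
    have hS : ∑ j ∈ range d, bitS x j = ∑ j ∈ range d, bitS y j := by
      refine Finset.sum_congr rfl fun j hj => ?_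
      rw [Finset.mem_range] at hj
      unfold bitS
      rw [PiNat.apply_eq_of_lt_firstDiff hj]
    have hx := partial_bounds x d
    have hy := partial_bounds y d
    rw [Subtype.dist_eq, Real.dist_eq]
    rw [abs_le]
    constructor <;> [skip; skip] <;> rw [hS] at hx <;> push_cast <;>
      [linarith [hx.1, hx.2, hy.1, hy.2]; linarith [hx.1, hx.2, hy.1, hy.2]]

lemma cantorMap_surjective : Function.Surjective cantorMap := by
  rintro ⟨r, hr0, hr1⟩
  rcases eq_or_lt_of_le hr1 with heq | hlt
  · refine ⟨fun _ => true, ?_⟩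
    apply Subtype.ext
    show ∑' n : ℕ, (if true then (1:ℝ) else 0) / 2 ^ (n+1) = r
    have : ∀ n : ℕ, (if true then (1:ℝ) else 0) / 2 ^ (n+1) = 1/2/2^n := by
      intro n; rw [pow_succ]; norm_num; ring
    rw [tsum_congr this, tsum_geometric_two' 1, heq]
  · -- r < 1
    set x : ℕ → Bool := fun n => decide ((⌊r * 2 ^ (n+1)⌋ - 2 * ⌊r * 2 ^ n⌋ : ℤ) = 1) with hx
    have hD : ∀ n : ℕ, (⌊r * 2 ^ (n+1)⌋ - 2 * ⌊r * 2 ^ n⌋ : ℤ) = 0 ∨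
        (⌊r * 2 ^ (n+1)⌋ - 2 * ⌊r * 2 ^ n⌋ : ℤ) = 1 := by
      intro n
      have h2 : r * 2 ^ (n+1) = 2 * (r * 2 ^ n) := by rw [pow_succ]; ring
      have hlo : (2 * ⌊r * 2 ^ n⌋ : ℤ) ≤ ⌊r * 2 ^ (n+1)⌋ := by
        rw [h2, Int.le_floor]
        push_cast
        linarith [Int.floor_le (r * 2 ^ n)]
      have hhi : (⌊r * 2 ^ (n+1)⌋ : ℤ) < 2 * ⌊r * 2 ^ n⌋ + 2 := by
        rw [h2, Int.floor_lt]
        push_cast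
        linarith [Int.lt_floor_add_one (r * 2 ^ n)]
      omega
    set g : ℕ → ℝ := fun k => (⌊r * 2 ^ k⌋ : ℝ) / 2 ^ k with hg
    have hbit : ∀ j : ℕ, CantorAux.bitS x j = g (j+1) - g j := by
      intro j
      have hpow : (0:ℝ) < 2 ^ j := by positivity
      have hpow1 : (0:ℝ) < 2 ^ (j+1) := by positivity
      rcases hD j with h | h
      · have : x j = false := by simp [hx, h]
        rw [CantorAux.bitS, this, hg]
        simp only [if_neg Bool.false_ne_true, zero_div]
        have : (⌊r * 2 ^ (j+1)⌋ : ℝ) = 2 * ⌊r * 2 ^ j⌋ := by exact_mod_cast (by omega : (⌊r * 2 ^ (j+1)⌋ : ℤ) = 2 * ⌊r * 2 ^ j⌋)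
        rw [this]
        rw [pow_succ]
        field_simp
        ring
      · have : x j = true := by simp [hx, h]
        rw [CantorAux.bitS, this, hg]
        simp only [if_pos rfl, if_true]
        have : (⌊r * 2 ^ (j+1)⌋ : ℝ) = 2 * ⌊r * 2 ^ j⌋ + 1 := by exact_mod_cast (by omega : (⌊r * 2 ^ (j+1)⌋ : ℤ) = 2 * ⌊r * 2 ^ j⌋ + 1)
        rw [this, pow_succ]
        field_simp
        ring
    have hg0 : g 0 = 0 := by
      simp [hg, Int.floor_eq_zero_iff, Set.mem_Ico.mpr ⟨hr0, hlt⟩]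
    have hpartial : ∀ k, ∑ j ∈ Finset.range k, CantorAux.bitS x j = g k := by
      intro k
      rw [Finset.sum_congr rfl fun j _ => hbit j, Finset.sum_range_sub g, hg0, sub_zero]
    have hgtend : Filter.Tendsto g Filter.atTop (nhds r) := by
      have hle1 : ∀ k, g k ≤ r := by
        intro k
        rw [hg]
        have : (0:ℝ) < 2 ^ k := by positivity
        rw [div_le_iff₀ this]
        exact Int.floor_le _
      have hle2 : ∀ k, r - (1/2)^k ≤ g k := by
        intro k
        rw [hg]
        have h2 : (0:ℝ) < 2 ^ k := by positivity
        rw [sub_le_iff_le_add, div_add' _ _ _ (ne_of_gt h2), le_div_iff₀ h2]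
        have := Int.lt_floor_add_one (r * 2 ^ k)
        have hp : (1/2:ℝ)^k * 2^k = 1 := by
          rw [one_div, inv_pow, inv_mul_cancel₀ (ne_of_gt h2)]
        nlinarith
      have h1 : Filter.Tendsto (fun k : ℕ => r - (1/2:ℝ)^k) Filter.atTop (nhds r) := by
        have := tendsto_pow_atTop_nhds_zero_of_lt_one (by norm_num : (0:ℝ) ≤ 1/2) (by norm_num : (1/2:ℝ) < 1)
        simpa using tendsto_const_nhds.sub this
      exact tendsto_of_tendsto_of_tendsto_of_le_of_le h1 tendsto_const_nhds hle2 hle1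
    have hsum : Filter.Tendsto (fun k => ∑ j ∈ Finset.range k, CantorAux.bitS x j)
        Filter.atTop (nhds ((cantorMap x : ℝ))) := by
      rw [CantorAux.cantorMap_coe]
      exact (CantorAux.summable_bitS x).hasSum.tendsto_sum_nat
    have : (cantorMap x : ℝ) = r := by
      refine tendsto_nhds_unique hsum ?_
      simpa only [hpartial] using hgtend
    exact ⟨x, Subtype.ext this⟩

end CantorAux

/-- A subset `X` of the unit interval has sharp measure zero iff `c ⁻¹' X` has
sharp measure zero as a subset of the Cantor space. -/
theorem hasSharpMeasureZero_iff_preimage_cantorMap (X : Set (Set.Icc (0 : ℝ) 1)) :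
    HasSharpMeasureZero X ↔ HasSharpMeasureZero (cantorMap ⁻¹' X) := by
  classical
  constructor
  · intro h ε hε
    have hmin : ∀ n : ℕ, ∃ m : ℕ, (1/2 : ℝ)^m < min (min (ε (5*n)) (ε (5*n+1)))
        (min (min (ε (5*n+2)) (ε (5*n+3))) (ε (5*n+4))) := by
      intro n
      apply exists_pow_lt_of_lt_one
      · exact lt_min (lt_min (hε _) (hε _)) (lt_min (lt_min (hε _) (hε _)) (hε _))
      · norm_num
    choose k hk using hmin
    obtain ⟨U, π, hdiam, hcov, hfib, hev⟩ := h (fun n => (1/2:ℝ)^(k n)) (fun n => by positivity)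
    set A : ℕ → (ℕ → Bool) := fun n =>
      if h : (cantorMap ⁻¹' (U n)).Nonempty then h.choose else fun _ => false with hA
    set M : ℕ → ℤ := fun n => ⌊(2:ℝ)^(k n) * (cantorMap (A n) : ℝ)⌋ with hM
    set V : ℕ → Set (ℕ → Bool) := fun m =>
      {x | cantorMap x ∈ U (m/5) ∧ (CantorAux.tval (k (m/5)) x : ℤ) = M (m/5) - 2 + ((m % 5 : ℕ) : ℤ)}
      with hV
    have hkε : ∀ m : ℕ, (1/2:ℝ)^(k (m/5)) ≤ ε m := by
      intro m
      have h5 : m % 5 < 5 := Nat.mod_lt _ (by norm_num)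
      have hm5 : 5 * (m / 5) + m % 5 = m := Nat.div_add_mod m 5
      have hkk := hk (m/5)
      rw [lt_min_iff, lt_min_iff, lt_min_iff, lt_min_iff] at hkk
      obtain ⟨⟨h0, h1⟩, ⟨h2, h3⟩, h4⟩ := hkk
      calc (1/2:ℝ)^(k (m/5)) ≤ ε (5*(m/5) + m % 5) := by
            have : m % 5 = 0 ∨ m % 5 = 1 ∨ m % 5 = 2 ∨ m % 5 = 3 ∨ m % 5 = 4 := by omega
            rcases this with h|h|h|h|h <;> simp only [h, Nat.add_zero] <;> linarith
        _ = ε m := by rw [hm5]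
    have key : ∀ n (x : ℕ → Bool), cantorMap x ∈ U n → ∃ i, i < 5 ∧ x ∈ V (5*n + i) := by
      intro n x hx
      have hne : (cantorMap ⁻¹' (U n)).Nonempty := ⟨x, hx⟩
      have hAmem : cantorMap (A n) ∈ U n := by
        rw [hA]; simp only [dif_pos hne]; exact hne.choose_spec
      have hdist : dist (cantorMap x) (cantorMap (A n)) ≤ (1/2:ℝ)^(k n) := by
        have h1 := (EMetric.edist_le_diam_of_mem hx hAmem).trans (hdiam n)
        rw [edist_dist] at h1
        exact (ENNReal.ofReal_le_ofReal_iff (by positivity)).1 h1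
      rw [Subtype.dist_eq, Real.dist_eq, abs_le] at hdist
      obtain ⟨hd1, hd2⟩ := hdist
      have hpx := CantorAux.partial_bounds x (k n)
      rw [CantorAux.partial_eq_tval] at hpx
      obtain ⟨hpx1, hpx2⟩ := hpx
      set t : ℝ := (CantorAux.tval (k n) x : ℝ) with ht
      set P : ℝ := (2:ℝ)^(k n) with hP
      set K : ℝ := (1/2:ℝ)^(k n) with hK
      set ca : ℝ := (cantorMap (A n) : ℝ) with hca
      set cx : ℝ := (cantorMap x : ℝ) with hcx
      have hPpos : (0:ℝ) < P := by positivity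
      have hKP : K * P = 1 := by
        rw [hK, hP, one_div, inv_pow, inv_mul_cancel₀ (by positivity)]
      have htP : t / P * P = t := div_mul_cancel₀ t (ne_of_gt hPpos)
      have hMlb : (M n : ℝ) ≤ P * ca := by
        rw [hM]; exact Int.floor_le _
      have hMub : P * ca < (M n : ℝ) + 1 := by
        rw [hM]; exact Int.lt_floor_add_one _
      have e1 : t ≤ cx * P := by
        rw [← htP]; exact mul_le_mul_of_nonneg_right hpx1 hPpos.le
      have e2 : cx * P ≤ t + 1 := by
        calc cx * P ≤ (t/P + K) * P := mul_le_mul_of_nonneg_right hpx2 hPpos.le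
          _ = t + 1 := by rw [add_mul, htP, hKP]
      have e3 : cx * P ≤ ca * P + 1 := by
        calc cx * P ≤ (ca + K) * P := mul_le_mul_of_nonneg_right (by linarith) hPpos.le
          _ = ca * P + 1 := by rw [add_mul, hKP]
      have e4 : ca * P - 1 ≤ cx * P := by
        calc ca * P - 1 = (ca - K) * P := by rw [sub_mul, hKP]
          _ ≤ cx * P := mul_le_mul_of_nonneg_right (by linarith) hPpos.le
      have hlow : (M n : ℤ) - 2 ≤ (CantorAux.tval (k n) x : ℤ) := by
        have hr : (M n : ℝ) - 2 ≤ t := by nlinarith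
        rw [ht] at hr
        exact_mod_cast hr
      have hhigh : ((CantorAux.tval (k n) x : ℤ)) < M n + 2 := by
        have hr : t < (M n : ℝ) + 2 := by nlinarith
        rw [ht] at hr
        exact_mod_cast hr
      refine ⟨((CantorAux.tval (k n) x : ℤ) - (M n - 2)).toNat, by omega, ?_, ?_⟩
      · show cantorMap x ∈ U ((5*n + _)/5)
        have : (5*n + ((CantorAux.tval (k n) x : ℤ) - (M n - 2)).toNat)/5 = n := by omega
        rw [this]; exact hx
      · have h1 : (5*n + ((CantorAux.tval (k n) x : ℤ) - (M n - 2)).toNat)/5 = n := by omega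
        have h2 : (5*n + ((CantorAux.tval (k n) x : ℤ) - (M n - 2)).toNat) % 5
            = ((CantorAux.tval (k n) x : ℤ) - (M n - 2)).toNat := by omega
        rw [h1, h2]
        omega
    refine ⟨V, fun m => π (m/5), ?_, ?_, ?_, ?_⟩
    · intro m
      apply EMetric.diam_le
      intro x hx y hy
      rw [edist_dist]
      refine (ENNReal.ofReal_le_ofReal ?_)
      have htv : CantorAux.tval (k (m/5)) x = CantorAux.tval (k (m/5)) y := by
        exact_mod_cast hx.2.trans hy.2.symm
      have hcyl : x ∈ PiNat.cylinder y (k (m/5)) :=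
        PiNat.mem_cylinder_iff.2 (CantorAux.tval_inj _ _ _ htv)
      calc dist x y ≤ (1/2:ℝ)^(k (m/5)) := PiNat.mem_cylinder_iff_dist_le.1 hcyl
        _ ≤ ε m := hkε m
    · intro x hx
      have : cantorMap x ∈ ⋃ n, U n := hcov hx
      rw [Set.mem_iUnion] at this
      obtain ⟨n, hn⟩ := this
      obtain ⟨i, _, hmem⟩ := key n x hn
      exact Set.mem_iUnion.2 ⟨5*n + i, hmem⟩
    · intro m'
      obtain ⟨B, hB⟩ := (hfib m').bddAbove
      refine Set.Finite.subset (Set.finite_Iio (5*B+5)) ?_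
      intro m hm
      have : m/5 ≤ B := hB hm
      show m < 5*B+5
      omega
    · intro x hx
      filter_upwards [hev (cantorMap x) hx] with m hm
      rw [Set.mem_iUnion₂] at hm ⊢
      obtain ⟨j, hj, hcxj⟩ := hm
      obtain ⟨i, _, hmem⟩ := key j x hcxj
      refine ⟨5*j + i, ?_, hmem⟩
      show π ((5*j+i)/5) = m
      have : (5*j+i)/5 = j := by omega
      rw [this]; exact hj
  · intro h ε hε
    obtain ⟨V, π, hdiam, hcov, hfib, hev⟩ := h ε hε
    refine ⟨fun n => cantorMap '' V n, π, ?_, ?_, hfib, ?_⟩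
    · intro n
      apply EMetric.diam_le
      rintro _ ⟨a, ha, rfl⟩ _ ⟨b, hb, rfl⟩
      calc edist (cantorMap a) (cantorMap b) ≤ edist a b := by
            rw [edist_dist, edist_dist]
            exact ENNReal.ofReal_le_ofReal (CantorAux.dist_cantorMap_le a b)
        _ ≤ EMetric.diam (V n) := EMetric.edist_le_diam_of_mem ha hb
        _ ≤ _ := hdiam n
    · intro x hx
      obtain ⟨a, rfl⟩ := CantorAux.cantorMap_surjective x
      have : a ∈ ⋃ n, V n := hcov hx
      rw [Set.mem_iUnion] at this ⊢
      obtain ⟨n, hn⟩ := this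
      exact ⟨n, Set.mem_image_of_mem _ hn⟩
    · intro x hx
      obtain ⟨a, rfl⟩ := CantorAux.cantorMap_surjective x
      filter_upwards [hev a hx] with m hm
      rw [Set.mem_iUnion₂] at hm ⊢
      obtain ⟨j, hj, hja⟩ := hm
      exact ⟨j, hj, Set.mem_image_of_mem _ hja⟩
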